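/- Let α > 1 be irrational with convergent numerators p_n, and S_α the set avoided by the partition {A_α, B_α}. Then every numerator p_n of a convergent of α belongs to S_α. -/

import Mathlib

/-- `E α n` is the error `n - qα` where `qα` is the integer multiple of `α`
nearest to `n` (for `α > 1`, this multiple is `round (n/α) * α`). -/
noncomputable def E (α : ℝ) (n : ℕ) : ℝ := (n : ℝ) - round ((n : ℝ) / α) * α

/-- `A_α`: positive integers whose nearest multiple of `α` exceeds them. -/
def Aset (α : ℝ) : Set ℕ := {n | 0 < n ∧ E α n < 0}

/-- `B_α`: positive integers whose nearest multiple of `α` is below them. -/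
def Bset (α : ℝ) : Set ℕ := {n | 0 < n ∧ 0 < E α n}

/-- `S_α`: positive integers not expressible as a sum of two distinct elements
of `A_α` nor of two distinct elements of `B_α`. -/
def Sset (α : ℝ) : Set ℕ :=
  {s | 0 < s ∧ (∀ x ∈ Aset α, ∀ y ∈ Aset α, x ≠ y → x + y ≠ s) ∧
       (∀ x ∈ Bset α, ∀ y ∈ Bset α, x ≠ y → x + y ≠ s)}
/-- Data of the continued fraction expansion `α = [a 0; a 1, a 2, ...]` of an
irrational `α > 1`, with `t n` the successive complete quotients, and
`p n / q n` the convergents. -/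
structure CF (α : ℝ) where
  a : ℕ → ℕ
  t : ℕ → ℝ
  p : ℕ → ℕ
  q : ℕ → ℕ
  t0 : t 0 = α
  ha : ∀ n, 1 ≤ a n
  floor_t : ∀ n, (a n : ℝ) = ⌊t n⌋
  t_rec : ∀ n, t n = a n + 1 / t (n + 1)
  p0 : p 0 = a 0
  p1 : p 1 = a 1 * a 0 + 1
  p_rec : ∀ n, p (n + 2) = a (n + 2) * p (n + 1) + p n
  q0 : q 0 = 1
  q1 : q 1 = a 1
  q_rec : ∀ n, q (n + 2) = a (n + 2) * q (n + 1) + q n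

/-- The numerators extended by two initial terms: `P 0 = p_{-2} = 0`,
`P 1 = p_{-1} = 1`, and `P (n+2) = p n`. -/
def CF.P {α : ℝ} (c : CF α) : ℕ → ℕ
  | 0 => 0
  | 1 => 1
  | n + 2 => c.p n

def CF.Qe {α : ℝ} (c : CF α) : ℕ → ℕ
  | 0 => 1
  | 1 => 0
  | n + 2 => c.q n

lemma CF.P_rec' {α : ℝ} (c : CF α) (k : ℕ) :
    c.P (k + 2) = c.a k * c.P (k + 1) + c.P k := by
  match k with
  | 0 => simp [CF.P, c.p0]
  | 1 => simp [CF.P, c.p1, c.p0]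
  | k + 2 => simpa [CF.P] using c.p_rec k

lemma CF.Qe_rec' {α : ℝ} (c : CF α) (k : ℕ) :
    c.Qe (k + 2) = c.a k * c.Qe (k + 1) + c.Qe k := by
  match k with
  | 0 => simp [CF.Qe, c.q0]
  | 1 => simp [CF.Qe, c.q1, c.q0]
  | k + 2 => simpa [CF.Qe] using c.q_rec k

lemma CF.P_pos {α : ℝ} (c : CF α) : ∀ k, 1 ≤ c.P (k + 1) := by
  intro k
  induction k with
  | zero => simp [CF.P]
  | succ k ih =>
      rw [c.P_rec']
      have := c.ha k
      nlinarith

lemma CF.P_lt {α : ℝ} (c : CF α) (k : ℕ) : c.P (k + 2) < c.P (k + 3) := by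
  have h : c.P (k + 3) = c.a (k+1) * c.P (k + 2) + c.P (k+1) := c.P_rec' (k+1)
  have h1 := c.P_pos (k + 1)
  have h2 := c.P_pos k
  have h3 := c.ha (k+1)
  nlinarith

lemma CF.t_irr' {α : ℝ} (hirr : Irrational α) (c : CF α) : ∀ k, Irrational (c.t k) := by
  intro k
  induction k with
  | zero => rwa [c.t0]
  | succ k ih =>
      by_contra h
      rw [Irrational, Set.not_notMem] at h
      obtain ⟨q, hq⟩ := h
      have : c.t k = ((c.a k + 1/q : ℚ) : ℝ) := by
        rw [c.t_rec k, ← hq]; push_cast; norm_num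
      exact (ih.ne_rat _) this

lemma CF.t_gt {α : ℝ} (hirr : Irrational α) (c : CF α) (k : ℕ) :
    1 < c.t k := by
  have h1 : (1 : ℝ) ≤ c.a k := by exact_mod_cast c.ha k
  have h2 : (c.a k : ℝ) ≤ c.t k := by
    rw [c.floor_t k]; exact Int.floor_le _
  have h3 : c.t k ≠ 1 := by
    have := (c.t_irr' hirr k).ne_int 1
    simpa using this
  rcases lt_or_eq_of_le (le_trans h1 h2) with h | h
  · exact h
  · exact absurd h.symm h3

noncomputable def eps {α : ℝ} (c : CF α) (k : ℕ) : ℝ := (c.P k : ℝ) / α - (c.Qe k : ℝ)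

lemma CF.key {α : ℝ} (hα : 1 < α) (hirr : Irrational α) (c : CF α) :
    ∀ k, α * (c.t k * c.Qe (k+1) + c.Qe k) = c.t k * c.P (k+1) + c.P k := by
  intro k
  induction k with
  | zero => simp [CF.Qe, CF.P, c.t0]
  | succ k ih =>
      have ht1 : (0:ℝ) < c.t (k+1) := lt_trans one_pos (c.t_gt hirr (k+1))
      have htt : c.t k * c.t (k+1) = c.a k * c.t (k+1) + 1 := by
        rw [c.t_rec k]
        field_simp
      have hQ : (c.Qe (k+2) : ℝ) = c.a k * c.Qe (k+1) + c.Qe k := by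
        exact_mod_cast congrArg (Nat.cast : ℕ → ℝ) (c.Qe_rec' k)
      have hP : (c.P (k+2) : ℝ) = c.a k * c.P (k+1) + c.P k := by
        exact_mod_cast congrArg (Nat.cast : ℕ → ℝ) (c.P_rec' k)
      rw [hQ, hP]
      linear_combination c.t (k+1) * ih - (α * (c.Qe (k+1) : ℝ) - (c.P (k+1) : ℝ)) * htt

lemma CF.eps_rec {α : ℝ} (hα : 1 < α) (hirr : Irrational α) (c : CF α) (k : ℕ) :
    c.t k * eps c (k+1) = - eps c k := by
  have h := c.key hα hirr k
  have hα0 : α ≠ 0 := by positivity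
  rw [eps, eps]
  field_simp
  linarith [h]

lemma CF.eps_ne {α : ℝ} (hα : 1 < α) (hirr : Irrational α) (c : CF α) : ∀ k, eps c k ≠ 0 := by
  intro k
  induction k with
  | zero =>
      simp only [eps, CF.P, CF.Qe]
      norm_num
  | succ k ih =>
      intro h
      have := c.eps_rec hα hirr k
      rw [h, mul_zero] at this
      exact ih (by linarith)

lemma CF.eps_mul_neg {α : ℝ} (hα : 1 < α) (hirr : Irrational α) (c : CF α) (k : ℕ) :
    eps c k * eps c (k+1) < 0 := by
  have h := c.eps_rec hα hirr k
  have ht : (0:ℝ) < c.t k := lt_trans one_pos (c.t_gt hirr k)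
  have hne := c.eps_ne hα hirr k
  have : eps c k * eps c (k+1) = -(eps c k)^2 / c.t k := by
    rw [eq_div_iff ht.ne']
    linear_combination (eps c k) * h
  rw [this]
  apply div_neg_of_neg_of_pos _ ht
  have : 0 < (eps c k)^2 := by positivity
  linarith

lemma CF.det {α : ℝ} (c : CF α) : ∀ k : ℕ,
    (c.P (k+1) : ℤ) * c.Qe k - (c.P k : ℤ) * c.Qe (k+1) = (-1)^k := by
  intro k
  induction k with
  | zero => simp [CF.P, CF.Qe]
  | succ k ih =>
      have hP := c.P_rec' k
      have hQ := c.Qe_rec' k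
      have hP' : (c.P (k+2) : ℤ) = c.a k * c.P (k+1) + c.P k := by exact_mod_cast hP
      have hQ' : (c.Qe (k+2) : ℤ) = c.a k * c.Qe (k+1) + c.Qe k := by exact_mod_cast hQ
      rw [hP', hQ', pow_succ]
      linear_combination (-1 : ℤ) * ih

lemma abs_le_abs_add_of_mul_nonneg {a b : ℝ} (h : 0 ≤ a * b) : |a| ≤ |a + b| := by
  rcases mul_nonneg_iff.mp h with ⟨ha, hb⟩ | ⟨ha, hb⟩
  · rw [abs_of_nonneg ha, abs_of_nonneg (by linarith)]; linarith
  · rw [abs_of_nonpos ha, abs_of_nonpos (by linarith)]; linarith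

lemma CF.BA {α : ℝ} (hα : 1 < α) (hirr : Irrational α) (c : CF α) (K : ℕ) (m j : ℤ)
    (hm : m ≠ 0) (hlt : m.natAbs < c.P (K+1)) :
    |eps c K| ≤ |(m : ℝ)/α - (j : ℝ)| := by
  set d : ℤ := (-1)^K with hd
  have hdet : (c.P (K+1) : ℤ) * c.Qe K - (c.P K : ℤ) * c.Qe (K+1) = d := c.det K
  have hd2 : d * d = 1 := by
    rw [hd, ← pow_add]
    exact (neg_one_pow_eq_one_iff_even (by norm_num)).mpr ⟨K, by ring⟩
  set u : ℤ := d * (j * c.P (K+1) - m * c.Qe (K+1)) with hu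
  set v : ℤ := d * (m * c.Qe K - j * c.P K) with hv
  clear_value d
  clear hd
  have hmu : u * c.P K + v * c.P (K+1) = m := by
    rw [hu, hv]; linear_combination (d * m) * hdet + m * hd2
  have hju : u * c.Qe K + v * c.Qe (K+1) = j := by
    rw [hu, hv]; linear_combination (d * j) * hdet + j * hd2
  have hα0 : (0:ℝ) < α := lt_trans one_pos hα
  have hlin : (m : ℝ)/α - (j : ℝ) = u * eps c K + v * eps c (K+1) := by
    have h1 : (u:ℝ) * (c.P K : ℝ) + (v:ℝ) * (c.P (K+1) : ℝ) = (m : ℝ) := by exact_mod_cast hmu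
    have h2 : (u:ℝ) * (c.Qe K : ℝ) + (v:ℝ) * (c.Qe (K+1) : ℝ) = (j : ℝ) := by exact_mod_cast hju
    rw [eps, eps]
    have hαne : α ≠ 0 := by positivity
    field_simp
    linear_combination α * h2 - h1
  rw [hlin]
  -- now case analysis on u, v
  rcases eq_or_ne v 0 with hv0 | hv0
  · -- v = 0
    have hu0 : u ≠ 0 := by
      rintro hu0
      rw [hu0, hv0] at hmu
      simp at hmu
      omega
    rw [hv0]
    simp only [Int.cast_zero, zero_mul, add_zero, abs_mul]
    have : (1:ℝ) ≤ |(u:ℝ)| := by exact_mod_cast Int.one_le_abs hu0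
    nlinarith [abs_nonneg (eps c K)]
  rcases eq_or_ne u 0 with hu0 | hu0
  · -- u = 0 : m = v * P (K+1), contradiction with |m| < P (K+1)
    exfalso
    rw [hu0, zero_mul, zero_add] at hmu
    have h1 : 1 ≤ v.natAbs := Nat.one_le_iff_ne_zero.mpr (Int.natAbs_ne_zero.mpr hv0)
    have : c.P (K+1) ≤ m.natAbs := by
      rw [← hmu, Int.natAbs_mul, Int.natAbs_natCast]
      calc c.P (K+1) = 1 * c.P (K+1) := (one_mul _).symm
        _ ≤ v.natAbs * c.P (K+1) := Nat.mul_le_mul_right _ h1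
    omega
  -- both nonzero
  have hPpos : 0 < c.P (K+1) := c.P_pos K
  -- u, v opposite signs
  have hsign : (u < 0 ∧ 0 < v) ∨ (0 < u ∧ v < 0) := by
    rcases lt_trichotomy u 0 with h|h|h <;> rcases lt_trichotomy v 0 with h'|h'|h'
    all_goals first
      | (exfalso; exact hu0 h) | (exfalso; exact hv0 h')
      | (left; exact ⟨h, h'⟩) | (right; exact ⟨h, h'⟩)
      | skip
    · -- u < 0, v < 0 : m ≤ -P(K+1)
      exfalso
      have : m ≤ -(c.P (K+1) : ℤ) := by
        rw [← hmu]
        have h1 : u * c.P K ≤ 0 := mul_nonpos_of_nonpos_of_nonneg (by omega) (by positivity)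
        have h2 : v * c.P (K+1) ≤ -(c.P (K+1) : ℤ) := by nlinarith [Int.lt_iff_add_one_le.mp h']
        omega
      omega
    · -- u > 0, v > 0 : m ≥ P(K+1)
      exfalso
      have : (c.P (K+1) : ℤ) ≤ m := by
        rw [← hmu]
        have h1 : 0 ≤ u * c.P K := mul_nonneg (by omega) (by positivity)
        have h2 : (c.P (K+1) : ℤ) ≤ v * c.P (K+1) := by nlinarith [Int.lt_iff_add_one_le.mp h']
        omega
      omega
  -- ε K and ε (K+1) have opposite signs, so u·εK and v·ε(K+1) have the same sign
  have hee := c.eps_mul_neg hα hirr K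
  have huv : (u : ℝ) * v < 0 := by
    rcases hsign with ⟨h1, h2⟩ | ⟨h1, h2⟩ <;>
      [exact mul_neg_of_neg_of_pos (by exact_mod_cast h1) (by exact_mod_cast h2);
       exact mul_neg_of_pos_of_neg (by exact_mod_cast h1) (by exact_mod_cast h2)]
  have hprod : 0 ≤ ((u:ℝ) * eps c K) * ((v:ℝ) * eps c (K+1)) := by nlinarith
  calc |eps c K| ≤ |(u:ℝ) * eps c K| := by
        rw [abs_mul]
        have : (1:ℝ) ≤ |(u:ℝ)| := by exact_mod_cast Int.one_le_abs hu0
        nlinarith [abs_nonneg (eps c K)]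
    _ ≤ |(u:ℝ) * eps c K + (v:ℝ) * eps c (K+1)| := abs_le_abs_add_of_mul_nonneg hprod

lemma round_min (x : ℝ) (j : ℤ) : |x - round x| ≤ |x - (j:ℝ)| := by
  rcases eq_or_ne j (round x) with h | h
  · rw [h]
  · have h0 : (1:ℤ) ≤ |j - round x| := Int.one_le_abs (sub_ne_zero.mpr h)
    have h1 : (1:ℝ) ≤ |(j:ℝ) - (round x : ℝ)| := by
      have : ((j:ℝ) - (round x:ℝ)) = (((j - round x : ℤ)):ℝ) := by push_cast; ring
      rw [this, ← Int.cast_abs]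
      exact_mod_cast h0
    have h2 : |x - round x| ≤ 1/2 := abs_sub_round x
    have h3 : |(j:ℝ) - (round x:ℝ)| ≤ |(j:ℝ) - x| + |x - round x| := by
      calc |(j:ℝ) - (round x:ℝ)| = |((j:ℝ) - x) + (x - round x)| := by ring_nf
        _ ≤ |(j:ℝ) - x| + |x - round x| := abs_add_le _ _
    have h4 : |(j:ℝ) - x| = |x - (j:ℝ)| := abs_sub_comm _ _
    linarith


/-- The numerator of every convergent of `α` lies in `S_α`. -/
theorem stmt8 (α : ℝ) (hα : 1 < α) (hirr : Irrational α) (c : CF α) (n : ℕ) :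
    c.p n ∈ Sset α := by
  have hα0 : (0:ℝ) < α := lt_trans one_pos hα
  set K := n + 2 with hK
  have hp1 : 1 ≤ c.p n := c.P_pos (n+1)
  have hPlt : c.p n < c.P (K+1) := c.P_lt n
  have hfirr : ∀ m : ℕ, 0 < m → Irrational ((m:ℝ)/α) := by
    intro m hm
    exact hirr.natCast_div (by omega)
  have hflt : ∀ m : ℕ, 0 < m → |(m:ℝ)/α - round ((m:ℝ)/α)| < 1/2 := by
    intro m hm
    rcases lt_or_eq_of_le (abs_sub_round ((m:ℝ)/α)) with h | h
    · exact h
    · exfalso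
      rcases (abs_eq (by norm_num : (0:ℝ) ≤ 1/2)).mp h with h' | h'
      · exact (hfirr m hm).ne_rat ((round ((m:ℝ)/α) : ℚ) + 1/2) (by push_cast; linarith)
      · exact (hfirr m hm).ne_rat ((round ((m:ℝ)/α) : ℚ) - 1/2) (by push_cast; linarith)
  have hfne : ∀ m : ℕ, 0 < m → (m:ℝ)/α - round ((m:ℝ)/α) ≠ 0 := by
    intro m hm h
    exact (hfirr m hm).ne_int (round ((m:ℝ)/α)) (by linarith)
  have main : ∀ x y : ℕ, 0 < x → 0 < y → x ≠ y → x + y = c.p n →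
      0 < ((x:ℝ)/α - round ((x:ℝ)/α)) * ((y:ℝ)/α - round ((y:ℝ)/α)) → False := by
    intro x y hx hy hxy hsum hpos
    set fx := (x:ℝ)/α - round ((x:ℝ)/α) with hfx
    set fy := (y:ℝ)/α - round ((y:ℝ)/α) with hfy
    set fp := ((c.p n : ℝ))/α - round (((c.p n : ℝ))/α) with hfp
    have hxlt : x < c.p n := by omega
    have hylt : y < c.p n := by omega
    obtain ⟨hx2, hx1⟩ := abs_lt.mp (hflt x hx)
    obtain ⟨hy2, hy1⟩ := abs_lt.mp (hflt y hy)
    obtain ⟨hp2, hp1'⟩ := abs_lt.mp (hflt (c.p n) (by omega))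
    rw [← hfx] at hx1 hx2
    rw [← hfy] at hy1 hy2
    rw [← hfp] at hp1' hp2
    have hδle : |fp| ≤ |eps c K| := by
      have h := round_min ((c.p n : ℝ)/α) (c.q n : ℤ)
      have he : eps c K = (c.p n : ℝ)/α - (c.q n : ℝ) := by
        simp [eps, CF.P, CF.Qe, hK]
      rw [he, hfp]
      simpa using h
    have hBAx : |eps c K| ≤ |fx| := by
      have h := c.BA hα hirr K (x:ℤ) (round ((x:ℝ)/α))
        (by exact_mod_cast Nat.pos_iff_ne_zero.mp hx)
        (by simpa using (by omega : x < c.P (K+1)))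
      simpa [hfx] using h
    have hBAd : |eps c K| ≤ |fx - fy| := by
      have hm : ((x:ℤ) - y) ≠ 0 := by omega
      have hlt' : ((x:ℤ) - y).natAbs < c.P (K+1) := by omega
      have h := c.BA hα hirr K ((x:ℤ) - y) (round ((x:ℝ)/α) - round ((y:ℝ)/α)) hm hlt'
      have heq : (((x:ℤ) - y : ℤ):ℝ)/α - ((round ((x:ℝ)/α) - round ((y:ℝ)/α) : ℤ):ℝ)
          = fx - fy := by
        rw [hfx, hfy]; push_cast; ring
      rwa [heq] at h
    have hsumR : (x:ℝ) + y = (c.p n : ℝ) := by exact_mod_cast congrArg (Nat.cast : ℕ → ℝ) hsum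
    set k : ℤ := round ((c.p n : ℝ)/α) - round ((x:ℝ)/α) - round ((y:ℝ)/α) with hk2
    have hkey : fx + fy - fp = (k:ℝ) := by
      rw [hfx, hfy, hfp, hk2]
      push_cast
      have hαne : α ≠ 0 := ne_of_gt hα0
      field_simp
      linear_combination hsumR
    clear_value fx fy fp k
    have hkcases : k = -1 ∨ k = 0 ∨ k = 1 := by
      have hbig : |(k:ℝ)| < 2 := by
        rw [← hkey]
        rw [abs_lt]; constructor <;> linarith
      have h2 : |k| < 2 := by exact_mod_cast hbig
      have := abs_lt.mp h2
      omega
    rcases mul_pos_iff.mp hpos with ⟨hfx0, hfy0⟩ | ⟨hfx0, hfy0⟩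
    · -- both positive
      rcases hkcases with hk | hk | hk
      · -- k = -1 : fx + fy = fp - 1 < 0, impossible
        rw [hk] at hkey; push_cast at hkey; linarith
      · -- k = 0 : fx + fy = fp
        rw [hk] at hkey; push_cast at hkey
        have e1 : |fx| = fx := abs_of_pos hfx0
        have e2 : |fp| = fp := abs_of_pos (by linarith)
        rw [e1] at hBAx; rw [e2] at hδle
        linarith
      · -- k = 1 : fx + fy = fp + 1
        rw [hk] at hkey; push_cast at hkey
        have habs : |fx - fy| < -fp := abs_lt.mpr ⟨by linarith, by linarith⟩
        linarith [neg_abs_le fp]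
    · -- both negative
      rcases hkcases with hk | hk | hk
      · -- k = -1 : fx + fy = fp - 1, so fp = fx + fy + 1 > 0
        rw [hk] at hkey; push_cast at hkey
        have habs : |fx - fy| < fp := abs_lt.mpr ⟨by linarith, by linarith⟩
        linarith [le_abs_self fp]
      · -- k = 0
        rw [hk] at hkey; push_cast at hkey
        have e1 : |fx| = -fx := abs_of_neg hfx0
        have e2 : |fp| = -fp := abs_of_neg (by linarith)
        rw [e1] at hBAx; rw [e2] at hδle
        linarith
      · -- k = 1 : fx + fy = fp + 1 > 1/2 > 0, impossible
        rw [hk] at hkey; push_cast at hkey; linarith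
  have hEf : ∀ m : ℕ, E α m = α * ((m:ℝ)/α - round ((m:ℝ)/α)) := by
    intro m
    rw [E]
    have hαne : α ≠ 0 := ne_of_gt hα0
    field_simp
  refine ⟨hp1, ?_, ?_⟩
  · intro x hx y hy hxy hsum
    obtain ⟨hx0, hxE⟩ := hx
    obtain ⟨hy0, hyE⟩ := hy
    rw [hEf] at hxE hyE
    have h1 : (x:ℝ)/α - round ((x:ℝ)/α) < 0 := by nlinarith
    have h2 : (y:ℝ)/α - round ((y:ℝ)/α) < 0 := by nlinarith
    exact main x y hx0 hy0 hxy hsum (mul_pos_of_neg_of_neg h1 h2)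
  · intro x hx y hy hxy hsum
    obtain ⟨hx0, hxE⟩ := hx
    obtain ⟨hy0, hyE⟩ := hy
    rw [hEf] at hxE hyE
    have h1 : 0 < (x:ℝ)/α - round ((x:ℝ)/α) := by nlinarith
    have h2 : 0 < (y:ℝ)/α - round ((y:ℝ)/α) := by nlinarith
    exact main x y hx0 hy0 hxy hsum (mul_pos h1 h2)
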